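/- arXiv:2301.05630 — 2 statements merged into one kernel-verified Lean document; each statement's English description precedes it below -/
import Mathlib

section
/- For every integer τ ≥ 1, the sum of squared coefficients satisfies Σ_{i=1}^{τ} (α_τ^i)² ≤ 2H/τ. -/
open Finset

/-- The learning rate `α_τ = (H+1)/(H+τ)`. -/
noncomputable def lr (H : ℝ) (τ : ℕ) : ℝ := (H + 1) / (H + τ)

/-- The coefficients `α_τ^i`. -/
noncomputable def acoef (H : ℝ) (τ i : ℕ) : ℝ :=
  if i = 0 then ∏ j ∈ Finset.Icc 1 τ, (1 - lr H j)
  else lr H i * ∏ j ∈ Finset.Icc (i + 1) τ, (1 - lr H j)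

lemma Hj_pos {H : ℝ} (hH : 1 ≤ H) (j : ℕ) : 0 < H + j := by
  have : (0:ℝ) ≤ j := Nat.cast_nonneg j
  linarith

lemma lr_nonneg {H : ℝ} (hH : 1 ≤ H) (j : ℕ) : 0 ≤ lr H j :=
  div_nonneg (by linarith) (le_of_lt (Hj_pos hH j))

lemma lr_le_one {H : ℝ} (hH : 1 ≤ H) {j : ℕ} (hj : 1 ≤ j) : lr H j ≤ 1 := by
  have h1 : (1:ℝ) ≤ j := by exact_mod_cast hj
  rw [lr, div_le_one (Hj_pos hH j)]; linarith

lemma acoef_eq (H : ℝ) {i : ℕ} (τ : ℕ) (hi : 1 ≤ i) :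
    acoef H τ i = lr H i * ∏ j ∈ Finset.Icc (i + 1) τ, (1 - lr H j) := by
  rw [acoef, if_neg (by omega)]

lemma acoef_nonneg {H : ℝ} (hH : 1 ≤ H) {i : ℕ} (τ : ℕ) (hi : 1 ≤ i) :
    0 ≤ acoef H τ i := by
  rw [acoef_eq H τ hi]
  apply mul_nonneg (lr_nonneg hH i)
  apply Finset.prod_nonneg
  intro j hj
  have hj1 : 1 ≤ j := by have := (Finset.mem_Icc.mp hj).1; omega
  linarith [lr_le_one hH hj1]

lemma acoef_succ {H : ℝ} {i τ : ℕ} (hi : 1 ≤ i) (hiτ : i ≤ τ) :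
    acoef H (τ + 1) i = acoef H τ i * (1 - lr H (τ + 1)) := by
  rw [acoef_eq H (τ + 1) hi, acoef_eq H τ hi,
    Finset.prod_Icc_succ_top (by omega : i + 1 ≤ τ + 1)]
  ring

lemma one_sub_lr_succ {H : ℝ} (hH : 1 ≤ H) (τ : ℕ) :
    1 - lr H (τ + 1) = τ / (H + (τ + 1)) := by
  have h := Hj_pos hH (τ + 1)
  rw [lr]
  push_cast at h ⊢
  field_simp
  ring

lemma acoef_le {H : ℝ} (hH : 1 ≤ H) {i : ℕ} (hi : 1 ≤ i) :
    ∀ τ, i ≤ τ → acoef H τ i ≤ (H + 1) / (H + τ) := by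
  intro τ
  induction τ with
  | zero => intro h; omega
  | succ t ih =>
    intro hle
    rcases Nat.lt_or_ge t i with h | h
    · have : i = t + 1 := by omega
      subst this
      rw [acoef_eq H (t+1) hi,
        Finset.Icc_eq_empty (show ¬ (t + 1 + 1 ≤ t + 1) by omega)]
      simp [lr]
    · have hb := ih h
      rw [acoef_succ hi h, one_sub_lr_succ hH t]
      have ht0 : (0:ℝ) ≤ t := Nat.cast_nonneg t
      have h1 : 0 < H + (t:ℝ) := Hj_pos hH t
      have h2 : 0 < H + ((t:ℝ) + 1) := by push_cast [Hj_pos hH (t+1)]; linarith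
      have hnn : acoef H t i ≤ (H+1)/(H+t) := hb
      have hpos : 0 ≤ (t:ℝ) / (H + (t + 1)) := div_nonneg ht0 (le_of_lt h2)
      calc acoef H t i * ((t:ℝ) / (H + (t + 1)))
          ≤ (H + 1) / (H + t) * ((t:ℝ) / (H + (t + 1))) := by
            apply mul_le_mul_of_nonneg_right hb hpos
        _ ≤ (H + 1) / (H + (t + 1 : ℕ)) := by
            push_cast
            rw [div_mul_div_comm, div_le_div_iff₀ (by positivity) h2]
            nlinarith [mul_pos (show (0:ℝ) < H + 1 by linarith) h2]

lemma acoef_sum_le {H : ℝ} (hH : 1 ≤ H) :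
    ∀ τ, 1 ≤ τ → ∑ i ∈ Finset.Icc 1 τ, acoef H τ i ≤ 1 := by
  intro τ
  induction τ with
  | zero => intro h; omega
  | succ t ih =>
    intro _
    rcases Nat.lt_or_ge t 1 with h | h
    · have : t = 0 := by omega
      subst this
      rw [Finset.Icc_self, Finset.sum_singleton, acoef_eq H 1 le_rfl,
        Finset.Icc_eq_empty (show ¬ (1 + 1 ≤ 1) by omega)]
      simp [lr]
      rw [div_self (show H + 1 ≠ 0 by linarith)]
    · have hS := ih h
      have h01 : 0 ≤ 1 - lr H (t + 1) := by linarith [lr_le_one hH (by omega : 1 ≤ t + 1)]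
      rw [Finset.sum_Icc_succ_top (by omega : 1 ≤ t + 1)]
      have heq : ∑ i ∈ Finset.Icc 1 t, acoef H (t + 1) i
          = (∑ i ∈ Finset.Icc 1 t, acoef H t i) * (1 - lr H (t + 1)) := by
        rw [Finset.sum_mul]
        apply Finset.sum_congr rfl
        intro i hi
        have := Finset.mem_Icc.mp hi
        exact acoef_succ this.1 this.2
      rw [heq, acoef_eq H (t+1) (by omega),
        Finset.Icc_eq_empty (show ¬ (t + 1 + 1 ≤ t + 1) by omega)]
      simp only [Finset.prod_empty, mul_one]
      have hlr := lr_nonneg hH (t + 1)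
      have hSn : (∑ i ∈ Finset.Icc 1 t, acoef H t i) * (1 - lr H (t + 1))
          ≤ 1 * (1 - lr H (t + 1)) := by
        apply mul_le_mul_of_nonneg_right hS h01
      linarith

theorem stmt_2 (H : ℝ) (hH : 1 ≤ H) (τ : ℕ) (hτ : 1 ≤ τ) :
    ∑ i ∈ Finset.Icc 1 τ, (acoef H τ i) ^ 2 ≤ 2 * H / τ := by
  have hτ0 : (0:ℝ) < τ := by exact_mod_cast hτ
  have hHa : 0 < H + (τ:ℝ) := Hj_pos hH τ
  have hc : 0 ≤ (H + 1) / (H + (τ:ℝ)) := div_nonneg (by linarith) hHa.le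
  have step1 : ∑ i ∈ Finset.Icc 1 τ, (acoef H τ i) ^ 2
      ≤ ∑ i ∈ Finset.Icc 1 τ, (H + 1) / (H + τ) * acoef H τ i := by
    apply Finset.sum_le_sum
    intro i hi
    have hm := Finset.mem_Icc.mp hi
    have hnn := acoef_nonneg hH τ hm.1
    have hle := acoef_le hH hm.1 τ hm.2
    rw [sq]
    exact mul_le_mul_of_nonneg_right hle hnn
  have step2 : ∑ i ∈ Finset.Icc 1 τ, (H + 1) / (H + τ) * acoef H τ i
      ≤ (H + 1) / (H + τ) := by
    rw [← Finset.mul_sum]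
    calc (H + 1) / (H + (τ:ℝ)) * ∑ i ∈ Finset.Icc 1 τ, acoef H τ i
        ≤ (H + 1) / (H + (τ:ℝ)) * 1 :=
          mul_le_mul_of_nonneg_left (acoef_sum_le hH τ hτ) hc
      _ = (H + 1) / (H + (τ:ℝ)) := mul_one _
  have step3 : (H + 1) / (H + (τ:ℝ)) ≤ 2 * H / τ := by
    rw [div_le_div_iff₀ hHa hτ0]
    nlinarith
  linarith
end

section
/- Suppose J ∈ ℝ and h : S → ℝ satisfy the super-solution inequality J + h(s) ≥ r(s) + (Ph)(s) for every state s, where (Ph)(s) = Σ_{s'} P(s,s') h(s'). Then for every state s the discounted value satisfies V_γ(s) ≤ J/(1−γ) + sp(h). -/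
open Finset

/-- Application of a transition kernel `P` to a function `f`: `(Pf)(s) = Σ_{s'} P(s,s') f(s')`. -/
noncomputable def Pap {S : Type*} [Fintype S] (P : S → S → ℝ) (f : S → ℝ) : S → ℝ :=
  fun s => ∑ s' : S, P s s' * f s'

/-- The discounted value `V_γ(s) = Σ_{t=0}^{∞} γ^t (P^t r)(s)`. -/
noncomputable def Vdisc {S : Type*} [Fintype S] (γ : ℝ) (P : S → S → ℝ) (r : S → ℝ) (s : S) :
    ℝ := ∑' t : ℕ, γ ^ t * (Pap P)^[t] r s

/-- The span `sp(h) = max_s h(s) − min_s h(s)`. -/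
noncomputable def spanFn {S : Type*} [Fintype S] [Nonempty S] (h : S → ℝ) : ℝ :=
  Finset.univ.sup' Finset.univ_nonempty h - Finset.univ.inf' Finset.univ_nonempty h

section Aux

variable {S : Type*} [Fintype S]

lemma Pap_mono (P : S → S → ℝ) (hPnn : ∀ s s', 0 ≤ P s s') {f g : S → ℝ}
    (hfg : ∀ s, f s ≤ g s) (s : S) : Pap P f s ≤ Pap P g s :=
  Finset.sum_le_sum fun s' _ => mul_le_mul_of_nonneg_left (hfg s') (hPnn s s')

lemma Pap_le_const (P : S → S → ℝ) (hPnn : ∀ s s', 0 ≤ P s s')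
    (hPsum : ∀ s, ∑ s' : S, P s s' = 1) {f : S → ℝ} {c : ℝ}
    (hc : ∀ s, f s ≤ c) (s : S) : Pap P f s ≤ c := by
  have : Pap P f s ≤ ∑ s' : S, P s s' * c :=
    Finset.sum_le_sum fun s' _ => mul_le_mul_of_nonneg_left (hc s') (hPnn s s')
  simpa [← Finset.sum_mul, hPsum s] using this

lemma const_le_Pap (P : S → S → ℝ) (hPnn : ∀ s s', 0 ≤ P s s')
    (hPsum : ∀ s, ∑ s' : S, P s s' = 1) {f : S → ℝ} {c : ℝ}
    (hc : ∀ s, c ≤ f s) (s : S) : c ≤ Pap P f s := by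
  have : (∑ s' : S, P s s' * c) ≤ Pap P f s :=
    Finset.sum_le_sum fun s' _ => mul_le_mul_of_nonneg_left (hc s') (hPnn s s')
  simpa [← Finset.sum_mul, hPsum s] using this

lemma iter_le_const (P : S → S → ℝ) (hPnn : ∀ s s', 0 ≤ P s s')
    (hPsum : ∀ s, ∑ s' : S, P s s' = 1) {f : S → ℝ} {c : ℝ}
    (hc : ∀ s, f s ≤ c) : ∀ t s, (Pap P)^[t] f s ≤ c := by
  intro t
  induction t with
  | zero => simpa using hc
  | succ n ih =>
    intro s
    rw [Function.iterate_succ_apply']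
    exact Pap_le_const P hPnn hPsum ih s

lemma const_le_iter (P : S → S → ℝ) (hPnn : ∀ s s', 0 ≤ P s s')
    (hPsum : ∀ s, ∑ s' : S, P s s' = 1) {f : S → ℝ} {c : ℝ}
    (hc : ∀ s, c ≤ f s) : ∀ t s, c ≤ (Pap P)^[t] f s := by
  intro t
  induction t with
  | zero => simpa using hc
  | succ n ih =>
    intro s
    rw [Function.iterate_succ_apply']
    exact const_le_Pap P hPnn hPsum ih s

lemma Pap_affine (P : S → S → ℝ) (hPsum : ∀ s, ∑ s' : S, P s s' = 1)
    (J : ℝ) (u v : S → ℝ) (s : S) :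
    Pap P (fun s => J + u s - v s) s = J + Pap P u s - Pap P v s := by
  unfold Pap
  have key : ∀ s' : S, P s s' * (J + u s' - v s')
      = P s s' * J + (P s s' * u s' - P s s' * v s') := fun _ => by ring
  rw [Finset.sum_congr rfl (fun s' _ => key s'), Finset.sum_add_distrib,
    Finset.sum_sub_distrib, ← Finset.sum_mul, hPsum s, one_mul]
  ring

lemma summable_geom_mul {γ : ℝ} (hγ0 : 0 ≤ γ) (hγ1 : γ < 1) {u : ℕ → ℝ} {C : ℝ}
    (hu : ∀ t, |u t| ≤ C) : Summable fun t => γ ^ t * u t := by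
  apply Summable.of_norm_bounded
    ((summable_geometric_of_lt_one hγ0 hγ1).mul_left C)
  intro t
  rw [norm_mul, norm_pow, Real.norm_eq_abs, Real.norm_eq_abs, abs_of_nonneg hγ0]
  calc γ ^ t * |u t| ≤ γ ^ t * C := by
        exact mul_le_mul_of_nonneg_left (hu t) (pow_nonneg hγ0 t)
    _ = C * γ ^ t := mul_comm _ _

end Aux

theorem stmt_8 {S : Type*} [Fintype S] [Nonempty S]
    (P : S → S → ℝ) (hPnn : ∀ s s', 0 ≤ P s s') (hPsum : ∀ s, ∑ s' : S, P s s' = 1)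
    (r : S → ℝ) (γ : ℝ) (hγ0 : 0 ≤ γ) (hγ1 : γ < 1)
    (J : ℝ) (h : S → ℝ) (hsup : ∀ s, r s + Pap P h s ≤ J + h s) :
    ∀ s, Vdisc γ P r s ≤ J / (1 - γ) + spanFn h := by
  intro s
  set M : ℝ := Finset.univ.sup' Finset.univ_nonempty h with hM
  set m : ℝ := Finset.univ.inf' Finset.univ_nonempty h with hm
  have hhM : ∀ s, h s ≤ M := fun s => Finset.le_sup' h (Finset.mem_univ s)
  have hhm : ∀ s, m ≤ h s := fun s => Finset.inf'_le h (Finset.mem_univ s)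
  have hγpos : (0:ℝ) < 1 - γ := by linarith
  -- bounds on iterates of h
  have hiterM : ∀ t s, (Pap P)^[t] h s ≤ M := iter_le_const P hPnn hPsum hhM
  have hiterm : ∀ t s, m ≤ (Pap P)^[t] h s := const_le_iter P hPnn hPsum hhm
  -- bounds on iterates of r
  set Mr : ℝ := Finset.univ.sup' Finset.univ_nonempty r with hMr
  set mr : ℝ := Finset.univ.inf' Finset.univ_nonempty r with hmr
  have hiterMr : ∀ t s, (Pap P)^[t] r s ≤ Mr :=
    iter_le_const P hPnn hPsum (fun s => Finset.le_sup' r (Finset.mem_univ s))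
  have hitermr : ∀ t s, mr ≤ (Pap P)^[t] r s :=
    const_le_iter P hPnn hPsum (fun s => Finset.inf'_le r (Finset.mem_univ s))
  -- key inequality
  have key : ∀ t s, (Pap P)^[t] r s ≤ J + (Pap P)^[t] h s - (Pap P)^[t+1] h s := by
    intro t
    induction t with
    | zero =>
      intro s
      simpa using by linarith [hsup s]
    | succ n ih =>
      intro s
      have ih' : ∀ s, (Pap P)^[n] r s
          ≤ J + (Pap P)^[n] h s - Pap P ((Pap P)^[n] h) s := by
        intro s
        have := ih s
        rwa [Function.iterate_succ_apply'] at this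
      rw [Function.iterate_succ_apply' (Pap P) (n+1) h,
        Function.iterate_succ_apply' (Pap P) n h,
        Function.iterate_succ_apply' (Pap P) n r]
      calc Pap P ((Pap P)^[n] r) s
          ≤ Pap P (fun s => J + (Pap P)^[n] h s - Pap P ((Pap P)^[n] h) s) s :=
            Pap_mono P hPnn ih' s
        _ = J + Pap P ((Pap P)^[n] h) s - Pap P (Pap P ((Pap P)^[n] h)) s :=
            Pap_affine P hPsum J _ _ s
  -- summability facts
  have habsr : ∀ t, |(Pap P)^[t] r s| ≤ max |Mr| |mr| := by
    intro t
    rw [abs_le]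
    constructor
    · calc -(max |Mr| |mr|) ≤ -|mr| := by
            exact neg_le_neg (le_max_right _ _)
        _ ≤ mr := neg_abs_le mr
        _ ≤ _ := hitermr t s
    · exact le_trans (hiterMr t s) (le_trans (le_abs_self Mr) (le_max_left _ _))
  have habsh : ∀ t, |(Pap P)^[t] h s| ≤ max |M| |m| := by
    intro t
    rw [abs_le]
    refine ⟨?_, le_trans (hiterM t s) (le_trans (le_abs_self M) (le_max_left _ _))⟩
    calc -(max |M| |m|) ≤ -|m| := neg_le_neg (le_max_right _ _)
      _ ≤ m := neg_abs_le m
      _ ≤ _ := hiterm t s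
  have sumr : Summable fun t => γ ^ t * (Pap P)^[t] r s := summable_geom_mul hγ0 hγ1 habsr
  have sumh : Summable fun t => γ ^ t * (Pap P)^[t] h s := summable_geom_mul hγ0 hγ1 habsh
  have sumh1 : Summable fun t => γ ^ t * (Pap P)^[t+1] h s :=
    summable_geom_mul hγ0 hγ1 (fun t => habsh (t+1))
  have sumJ : Summable fun t : ℕ => γ ^ t * J :=
    (summable_geometric_of_lt_one hγ0 hγ1).mul_right J
  set A : ℝ := ∑' t : ℕ, γ ^ t * (Pap P)^[t] h s with hA
  set B : ℝ := ∑' t : ℕ, γ ^ t * (Pap P)^[t+1] h s with hB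
  -- A = h s + γ * B
  have hAB : A = h s + γ * B := by
    rw [hA, Summable.tsum_eq_zero_add sumh]
    simp only [pow_zero, one_mul, Function.iterate_zero_apply]
    congr 1
    rw [hB, ← tsum_mul_left]
    congr 1
    funext t
    ring
  -- B ≥ m / (1 - γ)
  have hBlb : m * (1 - γ)⁻¹ ≤ B := by
    have : (∑' t : ℕ, γ ^ t * m) ≤ B := by
      apply Summable.tsum_le_tsum _ ((summable_geometric_of_lt_one hγ0 hγ1).mul_right m) sumh1
      intro t
      exact mul_le_mul_of_nonneg_left (hiterm (t+1) s) (pow_nonneg hγ0 t)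
    calc m * (1 - γ)⁻¹ = (∑' t : ℕ, γ ^ t) * m := by
          rw [tsum_geometric_of_lt_one hγ0 hγ1]; ring
      _ = ∑' t : ℕ, γ ^ t * m := (tsum_mul_right).symm
      _ ≤ B := this
  -- main bound
  have step1 : Vdisc γ P r s ≤ ∑' t : ℕ, (γ ^ t * J + (γ ^ t * (Pap P)^[t] h s
      - γ ^ t * (Pap P)^[t+1] h s)) := by
    unfold Vdisc
    apply Summable.tsum_le_tsum _ sumr (sumJ.add (sumh.sub sumh1))
    intro t
    have := key t s
    have h1 : (Pap P)^[t] r s ≤ J + (Pap P)^[t] h s - (Pap P)^[t+1] h s := this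
    calc γ ^ t * (Pap P)^[t] r s
        ≤ γ ^ t * (J + (Pap P)^[t] h s - (Pap P)^[t+1] h s) :=
          mul_le_mul_of_nonneg_left h1 (pow_nonneg hγ0 t)
      _ = γ ^ t * J + (γ ^ t * (Pap P)^[t] h s - γ ^ t * (Pap P)^[t+1] h s) := by ring
  have step2 : (∑' t : ℕ, (γ ^ t * J + (γ ^ t * (Pap P)^[t] h s
      - γ ^ t * (Pap P)^[t+1] h s))) = J * (1 - γ)⁻¹ + (A - B) := by
    rw [Summable.tsum_add sumJ (sumh.sub sumh1), Summable.tsum_sub sumh sumh1]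
    congr 1
    rw [tsum_mul_right, tsum_geometric_of_lt_one hγ0 hγ1]
    ring
  have step3 : A - B ≤ spanFn h := by
    have h1 : A - B = h s - (1 - γ) * B := by rw [hAB]; ring
    have h2 : m ≤ (1 - γ) * B := by
      have := mul_le_mul_of_nonneg_left hBlb (le_of_lt hγpos)
      calc m = (1 - γ) * (m * (1 - γ)⁻¹) := by field_simp
        _ ≤ (1 - γ) * B := this
    rw [h1]
    unfold spanFn
    rw [← hM, ← hm]
    linarith [hhM s]
  calc Vdisc γ P r s ≤ J * (1 - γ)⁻¹ + (A - B) := by rw [← step2]; exact step1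
    _ ≤ J * (1 - γ)⁻¹ + spanFn h := by linarith
    _ = J / (1 - γ) + spanFn h := by rw [div_eq_mul_inv]
end
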